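/- Assume additionally the kernel bound 0 ≤ ⟨Φ(x),Φ(y)⟩ ≤ K for all x, y ∈ X. Let Q₀ and Q₁ be probability measures on X with D := ‖μ_{Q₁} − μ_{Q₀}‖_H, let θ ≥ 0 with 2θ ≤ D, and let 𝒫₀, 𝒫₁ be the MMD uncertainty sets of radius θ centered at Q₀, Q₁. For n i.i.d. samples x₁,…,xₙ and empirical embedding μ̂ₙ = (1/n)∑ᵢ Φ(xᵢ), the following hold: (i) for every P₀ ∈ 𝒫₀, the P₀^{⊗n}-probability of the event ‖μ̂ₙ − μ_{Q₀}‖_H ≥ ‖μ̂ₙ − μ_{Q₁}‖_H is at most exp(−n(D² − 2θD)²/(8K²)); (ii) for every P₁ ∈ 𝒫₁, the P₁^{⊗n}-probability of the event ‖μ̂ₙ − μ_{Q₀}‖_H < ‖μ̂ₙ − μ_{Q₁}‖_H is at most exp(−n(D² − 2θD)²/(8K²)). -/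

import Mathlib

open MeasureTheory
open scoped ENNReal InnerProductSpace

/-- The core analytic inequality behind Hoeffding's lemma. -/
lemma hoeff_core (p : ℝ) (hp0 : 0 ≤ p) (hp1 : p ≤ 1) (u : ℝ) :
    (1 - p) * Real.exp (-p * u) + p * Real.exp ((1 - p) * u) ≤ Real.exp (u ^ 2 / 8) := by
  set g : ℝ → ℝ := fun v => 1 - p + p * Real.exp v with hg
  have hgpos : ∀ v, 0 < g v := by
    intro v
    show 0 < 1 - p + p * Real.exp v
    rcases eq_or_lt_of_le hp0 with h | h
    · simp [← h]
    · have := Real.exp_pos v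
      nlinarith
  -- rewrite LHS
  have hlhs : (1 - p) * Real.exp (-p * u) + p * Real.exp ((1 - p) * u)
      = Real.exp (-p * u) * g u := by
    rw [hg]
    have : Real.exp ((1 - p) * u) = Real.exp (-p * u) * Real.exp u := by
      rw [← Real.exp_add]; ring_nf
    rw [this]; ring
  rw [hlhs]
  -- suffices: log (g u) ≤ u^2/8 + p*u
  have hsuff : Real.log (g u) ≤ u ^ 2 / 8 + p * u → Real.exp (-p * u) * g u ≤ Real.exp (u ^ 2 / 8) := by
    intro h
    have := (Real.log_le_iff_le_exp (hgpos u)).mp h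
    calc Real.exp (-p * u) * g u ≤ Real.exp (-p * u) * Real.exp (u ^ 2 / 8 + p * u) := by
          exact mul_le_mul_of_nonneg_left this (le_of_lt (Real.exp_pos _))
      _ = Real.exp (u ^ 2 / 8) := by rw [← Real.exp_add]; ring_nf
  apply hsuff
  -- ψ v := v^2/8 + p v - log (g v); show ψ u ≥ 0
  set ψ : ℝ → ℝ := fun v => v ^ 2 / 8 + p * v - Real.log (g v) with hψdef
  set φ : ℝ → ℝ := fun v => v / 4 + p - p * Real.exp v / g v with hφdef
  have hg' : ∀ v, HasDerivAt g (p * Real.exp v) v := by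
    intro v
    exact ((Real.hasDerivAt_exp v).const_mul p).const_add (1 - p)
  have hψ' : ∀ v, HasDerivAt ψ (φ v) v := by
    intro v
    have hlog : HasDerivAt (fun v => Real.log (g v)) (p * Real.exp v / g v) v :=
      (hg' v).log (ne_of_gt (hgpos v))
    have h1 : HasDerivAt (fun v : ℝ => v ^ 2 / 8 + p * v) (v / 4 + p) v := by
      have := ((hasDerivAt_pow 2 v).div_const 8).add ((hasDerivAt_id v).const_mul p)
      exact this.congr_deriv (by ring)
    exact h1.sub hlog
  have hφ' : ∀ v, HasDerivAt φ (1/4 - p * Real.exp v * (1 - p) / (g v) ^ 2) v := by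
    intro v
    have hnum : HasDerivAt (fun v => p * Real.exp v) (p * Real.exp v) v :=
      (Real.hasDerivAt_exp v).const_mul p
    have hdiv : HasDerivAt (fun v => p * Real.exp v / g v)
        ((p * Real.exp v * g v - p * Real.exp v * (p * Real.exp v)) / (g v) ^ 2) v :=
      hnum.div (hg' v) (ne_of_gt (hgpos v))
    have h1 : HasDerivAt (fun v : ℝ => v / 4 + p) (1/4) v := by
      simpa using (hasDerivAt_id v).div_const 4 |>.add_const p
    have := h1.sub hdiv
    refine this.congr_deriv ?_
    have : g v = 1 - p + p * Real.exp v := rfl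
    rw [this]
    ring
  have hφnonneg : ∀ v, 0 ≤ 1/4 - p * Real.exp v * (1 - p) / (g v) ^ 2 := by
    intro v
    rw [sub_nonneg, div_le_iff₀ (pow_pos (hgpos v) 2)]
    have : g v = 1 - p + p * Real.exp v := rfl
    nlinarith [sq_nonneg (1 - p - p * Real.exp v), Real.exp_pos v]
  have hφmono : Monotone φ := by
    apply monotone_of_deriv_nonneg
    · exact fun v => (hφ' v).differentiableAt
    · intro v; rw [(hφ' v).deriv]; exact hφnonneg v
  have hφ0 : φ 0 = 0 := by
    simp [hφdef, hg]
  have hψ0 : ψ 0 = 0 := by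
    simp [hψdef, hg]
  have hψcont : Continuous ψ := by
    rw [continuous_iff_continuousAt]
    exact fun v => (hψ' v).differentiableAt.continuousAt
  have key : 0 ≤ ψ u := by
    rcases le_total 0 u with h | h
    · have hm : MonotoneOn ψ (Set.Ici 0) := by
        apply monotoneOn_of_deriv_nonneg (convex_Ici 0) hψcont.continuousOn
        · exact fun v _ => (hψ' v).differentiableAt.differentiableWithinAt
        · intro v hv
          rw [interior_Ici] at hv
          rw [(hψ' v).deriv]
          calc (0:ℝ) = φ 0 := hφ0.symm
            _ ≤ φ v := hφmono (le_of_lt hv)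
      calc (0:ℝ) = ψ 0 := hψ0.symm
        _ ≤ ψ u := hm (by simp) (by simpa using h) h
    · have hm : AntitoneOn ψ (Set.Iic 0) := by
        apply antitoneOn_of_deriv_nonpos (convex_Iic 0) hψcont.continuousOn
        · exact fun v _ => (hψ' v).differentiableAt.differentiableWithinAt
        · intro v hv
          rw [interior_Iic] at hv
          rw [(hψ' v).deriv]
          calc φ v ≤ φ 0 := hφmono (le_of_lt hv)
            _ = 0 := hφ0
      calc (0:ℝ) = ψ 0 := hψ0.symm
        _ ≤ ψ u := hm (by simpa using h) (by simp) h
  have := key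
  rw [hψdef] at this
  simp only [sub_nonneg] at this
  linarith [this]

lemma hoeffding_mgf {X : Type*} [MeasurableSpace X] (P : Measure X) [IsProbabilityMeasure P]
    (f : X → ℝ) (hf : Measurable f) (a b : ℝ) (hab : ∀ x, f x ∈ Set.Icc a b) (l : ℝ) :
    ∫ x, Real.exp (l * f x) ∂P
      ≤ Real.exp (l * (∫ x, f x ∂P) + l ^ 2 * (b - a) ^ 2 / 8) := by
  have habs : ∀ x, ‖f x‖ ≤ max |a| |b| := by
    intro x
    obtain ⟨h1, h2⟩ := hab x
    rw [Real.norm_eq_abs, abs_le]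
    constructor
    · have := neg_abs_le a; have := le_max_left |a| |b|; linarith
    · have := le_abs_self b; have := le_max_right |a| |b|; linarith
  have hfint : Integrable f P :=
    (integrable_const (max |a| |b|)).mono' hf.aestronglyMeasurable
      (Filter.Eventually.of_forall habs)
  set m := ∫ x, f x ∂P with hm
  have hma : a ≤ m := by
    have := integral_mono (integrable_const a) hfint (fun x => (hab x).1)
    simpa using this
  have hmb : m ≤ b := by
    have := integral_mono hfint (integrable_const b) (fun x => (hab x).2)
    simpa using this
  rcases eq_or_lt_of_le (le_trans hma hmb) with hab' | hab'
  · -- a = b, f is a.e. constant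
    subst hab'
    have hfa : ∀ x, f x = a := fun x => le_antisymm (hab x).2 (hab x).1
    have h1 : ∫ x, Real.exp (l * f x) ∂P = Real.exp (l * a) := by
      simp only [hfa]; simp
    have h2 : m = a := le_antisymm hmb hma
    rw [h1, h2]
    simp
  · -- a < b
    have hba : (0:ℝ) < b - a := by linarith
    set p : ℝ := (m - a) / (b - a) with hp
    set u : ℝ := l * (b - a) with hu
    have hp0 : 0 ≤ p := div_nonneg (by linarith) hba.le
    have hp1 : p ≤ 1 := (div_le_one hba).mpr (by linarith)
    set c1 : ℝ := (Real.exp (l * b) - Real.exp (l * a)) / (b - a) with hc1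
    set c2 : ℝ := (b * Real.exp (l * a) - a * Real.exp (l * b)) / (b - a) with hc2
    -- pointwise convexity bound
    have hpt : ∀ x, Real.exp (l * f x) ≤ c1 * f x + c2 := by
      intro x
      obtain ⟨h1, h2⟩ := hab x
      have hw1 : (0:ℝ) ≤ (b - f x) / (b - a) := div_nonneg (by linarith) hba.le
      have hw2 : (0:ℝ) ≤ (f x - a) / (b - a) := div_nonneg (by linarith) hba.le
      have hsum : (b - f x) / (b - a) + (f x - a) / (b - a) = 1 := by
        field_simp
        ring
      have hcvx := convexOn_exp.2 (Set.mem_univ (l * a)) (Set.mem_univ (l * b)) hw1 hw2 hsum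
      simp only [smul_eq_mul] at hcvx
      have hpoint : (b - f x) / (b - a) * (l * a) + (f x - a) / (b - a) * (l * b) = l * f x := by
        rw [div_mul_eq_mul_div, div_mul_eq_mul_div, ← add_div, div_eq_iff hba.ne']
        ring
      rw [hpoint] at hcvx
      calc Real.exp (l * f x)
          ≤ (b - f x) / (b - a) * Real.exp (l * a) + (f x - a) / (b - a) * Real.exp (l * b) := by
            simpa [smul_eq_mul] using hcvx
        _ = c1 * f x + c2 := by rw [hc1, hc2]; field_simp; ring
    -- integrability of exp (l * f)
    have hexpint : Integrable (fun x => Real.exp (l * f x)) P := by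
      apply (integrable_const (Real.exp (|l| * max |a| |b|))).mono'
        (((hf.const_mul l).exp).aestronglyMeasurable)
      filter_upwards with x
      rw [Real.norm_eq_abs, abs_of_pos (Real.exp_pos _), Real.exp_le_exp]
      calc l * f x ≤ |l * f x| := le_abs_self _
        _ = |l| * |f x| := abs_mul _ _
        _ ≤ |l| * max |a| |b| := by
            apply mul_le_mul_of_nonneg_left _ (abs_nonneg l)
            simpa [Real.norm_eq_abs] using habs x
    have hlinint : Integrable (fun x => c1 * f x + c2) P :=
      (hfint.const_mul c1).add (integrable_const c2)
    have hstep : ∫ x, Real.exp (l * f x) ∂P ≤ c1 * m + c2 := by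
      calc ∫ x, Real.exp (l * f x) ∂P ≤ ∫ x, (c1 * f x + c2) ∂P :=
            integral_mono hexpint hlinint hpt
        _ = c1 * m + c2 := by
            rw [integral_add (hfint.const_mul c1) (integrable_const c2),
              integral_const_mul, integral_const]
            simp [hm]
    have hkey : c1 * m + c2 = (1 - p) * Real.exp (l * a) + p * Real.exp (l * b) := by
      rw [hc1, hc2, hp]; field_simp; ring
    have e1eq : Real.exp (l * m) * Real.exp (-p * u) = Real.exp (l * a) := by
      rw [← Real.exp_add]
      congr 1
      rw [hp, hu]
      field_simp
      ring
    have e2eq : Real.exp (l * m) * Real.exp ((1 - p) * u) = Real.exp (l * b) := by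
      rw [← Real.exp_add]
      congr 1
      rw [hp, hu]
      field_simp
      ring
    calc ∫ x, Real.exp (l * f x) ∂P ≤ c1 * m + c2 := hstep
      _ = Real.exp (l * m) * ((1 - p) * Real.exp (-p * u) + p * Real.exp ((1 - p) * u)) := by
          rw [hkey, ← e1eq, ← e2eq]; ring
      _ ≤ Real.exp (l * m) * Real.exp (u ^ 2 / 8) :=
          mul_le_mul_of_nonneg_left (hoeff_core p hp0 hp1 u) (Real.exp_pos _).le
      _ = Real.exp (l * m + l ^ 2 * (b - a) ^ 2 / 8) := by
          rw [← Real.exp_add]; congr 1; rw [hu]; ring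

lemma chernoff_pi {X : Type*} [MeasurableSpace X] (P : Measure X) [IsProbabilityMeasure P]
    (f : X → ℝ) (hf : Measurable f) (a b K : ℝ) (hK : 0 < K) (hab' : a ≤ b)
    (hab : ∀ x, f x ∈ Set.Icc a b) (hba : b - a ≤ 2 * K)
    (t : ℝ) (ht : 0 ≤ t) (hm : ∫ x, f x ∂P ≤ -t) (n : ℕ) :
    (Measure.pi fun _ : Fin n => P) {xs | 0 ≤ ∑ i, f (xs i)}
      ≤ ENNReal.ofReal (Real.exp (-(n * t ^ 2) / (2 * K ^ 2))) := by
  set l : ℝ := t / K ^ 2 with hl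
  have hK2 : (0:ℝ) < K ^ 2 := by positivity
  have hl0 : 0 ≤ l := div_nonneg ht hK2.le
  have hsummeas : Measurable fun xs : Fin n → X => ∑ i, f (xs i) :=
    Finset.measurable_sum Finset.univ (fun i _ => hf.comp (measurable_pi_apply i))
  set F : (Fin n → X) → ℝ := fun xs => Real.exp (l * ∑ i, f (xs i)) with hF
  have hFmeas : Measurable F := (hsummeas.const_mul l).exp
  have hSmeas : MeasurableSet {xs : Fin n → X | 0 ≤ ∑ i, f (xs i)} :=
    measurableSet_le measurable_const hsummeas
  set μn := Measure.pi fun _ : Fin n => P with hμn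
  -- step 1 : Markov
  have step1 : μn {xs | 0 ≤ ∑ i, f (xs i)} ≤ ∫⁻ xs, ENNReal.ofReal (F xs) ∂μn := by
    rw [← lintegral_indicator_one hSmeas]
    apply lintegral_mono
    intro xs
    by_cases h : xs ∈ {xs : Fin n → X | 0 ≤ ∑ i, f (xs i)}
    · simp only [Set.indicator_of_mem h, Pi.one_apply]
      rw [show (1 : ℝ≥0∞) = ENNReal.ofReal 1 by simp]
      exact ENNReal.ofReal_le_ofReal (Real.one_le_exp (mul_nonneg hl0 h))
    · simp [Set.indicator_of_notMem h]
  -- integrability of F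
  have hFbdd : ∀ xs : Fin n → X, ‖F xs‖ ≤ Real.exp (l * (n * max |a| |b|)) := by
    intro xs
    rw [Real.norm_eq_abs, abs_of_pos (Real.exp_pos _), Real.exp_le_exp]
    apply mul_le_mul_of_nonneg_left _ hl0
    calc ∑ i, f (xs i) ≤ ∑ _i : Fin n, b := Finset.sum_le_sum fun i _ => (hab (xs i)).2
      _ = n * b := by simp [Finset.sum_const, mul_comm]
      _ ≤ n * max |a| |b| := by
          apply mul_le_mul_of_nonneg_left _ (Nat.cast_nonneg n)
          exact le_trans (le_abs_self b) (le_max_right _ _)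
  have hFint : Integrable F μn :=
    (integrable_const _).mono' hFmeas.aestronglyMeasurable (Filter.Eventually.of_forall hFbdd)
  -- step 2 : switch to Bochner integral
  have step2 : ∫⁻ xs, ENNReal.ofReal (F xs) ∂μn = ENNReal.ofReal (∫ xs, F xs ∂μn) :=
    (ofReal_integral_eq_lintegral_ofReal hFint
      (Filter.Eventually.of_forall fun xs => (Real.exp_pos _).le)).symm
  -- step 3 : product structure
  letI : MeasureSpace X := ⟨P⟩
  have step3 : ∫ xs, F xs ∂μn = (∫ x, Real.exp (l * f x) ∂P) ^ n := by
    have h1 : ∀ xs : Fin n → X, F xs = ∏ i, Real.exp (l * f (xs i)) := by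
      intro xs
      show Real.exp (l * ∑ i, f (xs i)) = _
      rw [Finset.mul_sum, Real.exp_sum]
    simp_rw [h1]
    have h2 : μn = (volume : Measure (Fin n → X)) := by
      rw [hμn, MeasureTheory.volume_pi]; rfl
    rw [h2]
    have := MeasureTheory.integral_fintype_prod_volume_eq_pow (𝕜 := ℝ) (ι := Fin n)
      (fun x : X => Real.exp (l * f x))
    rw [Fintype.card_fin] at this
    exact this
  -- step 4 : Hoeffding bound on the mgf
  have step4 : ∫ x, Real.exp (l * f x) ∂P ≤ Real.exp (-(t ^ 2) / (2 * K ^ 2)) := by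
    refine le_trans (hoeffding_mgf P f hf a b hab l) ?_
    rw [Real.exp_le_exp]
    have e1 : l * (∫ x, f x ∂P) ≤ -(t ^ 2) / K ^ 2 := by
      calc l * (∫ x, f x ∂P) ≤ l * (-t) := mul_le_mul_of_nonneg_left hm hl0
        _ = -(t ^ 2) / K ^ 2 := by rw [hl]; ring
    have hsq : (b - a) ^ 2 ≤ 4 * K ^ 2 := by nlinarith [sub_nonneg.mpr hab']
    have e2 : l ^ 2 * (b - a) ^ 2 / 8 ≤ t ^ 2 / (2 * K ^ 2) := by
      calc l ^ 2 * (b - a) ^ 2 / 8 ≤ l ^ 2 * (4 * K ^ 2) / 8 := by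
            apply div_le_div_of_nonneg_right _ (by norm_num)
            exact mul_le_mul_of_nonneg_left hsq (by positivity)
        _ = t ^ 2 / (2 * K ^ 2) := by rw [hl]; field_simp; ring
    have e3 : -(t ^ 2) / K ^ 2 + t ^ 2 / (2 * K ^ 2) = -(t ^ 2) / (2 * K ^ 2) := by
      field_simp; ring
    linarith
  -- combine
  calc μn {xs | 0 ≤ ∑ i, f (xs i)} ≤ ∫⁻ xs, ENNReal.ofReal (F xs) ∂μn := step1
    _ = ENNReal.ofReal (∫ xs, F xs ∂μn) := step2
    _ = ENNReal.ofReal ((∫ x, Real.exp (l * f x) ∂P) ^ n) := by rw [step3]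
    _ ≤ ENNReal.ofReal (Real.exp (-(n * t ^ 2) / (2 * K ^ 2))) := by
        apply ENNReal.ofReal_le_ofReal
        calc (∫ x, Real.exp (l * f x) ∂P) ^ n
            ≤ (Real.exp (-(t ^ 2) / (2 * K ^ 2))) ^ n :=
              pow_le_pow_left₀ (integral_nonneg fun x => (Real.exp_pos _).le) step4 n
          _ = Real.exp (-(n * t ^ 2) / (2 * K ^ 2)) := by
              rw [← Real.exp_nat_mul]
              congr 1
              field_simp

/-- Exponential bounds on the worst-case error probabilities of the direct robust kernel
test (with threshold `γ = 0`): under any `P₀ ∈ 𝒫₀` the probability of deciding `H₁`, and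
under any `P₁ ∈ 𝒫₁` the probability of deciding `H₀`, are both at most
`exp(−n(D² − 2θD)²/(8K²))` where `D = ‖μ_{Q₁} − μ_{Q₀}‖`. -/
theorem stmt3
    {X H : Type*} [MeasurableSpace X]
    [NormedAddCommGroup H] [InnerProductSpace ℝ H] [CompleteSpace H]
    (Φ : X → H) (hΦm : StronglyMeasurable Φ) (C : ℝ) (hΦb : ∀ x, ‖Φ x‖ ≤ C)
    (K : ℝ) (hker : ∀ x y : X, 0 ≤ ⟪Φ x, Φ y⟫_ℝ ∧ ⟪Φ x, Φ y⟫_ℝ ≤ K)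
    (Q₀ Q₁ : Measure X) [IsProbabilityMeasure Q₀] [IsProbabilityMeasure Q₁]
    (θ : ℝ) (hθ : 0 ≤ θ) :
    let μemb : Measure X → H := fun P => ∫ x, Φ x ∂P
    let emp : ∀ n : ℕ, (Fin n → X) → H := fun n xs => (n : ℝ)⁻¹ • ∑ i, Φ (xs i)
    let D : ℝ := ‖μemb Q₁ - μemb Q₀‖
    2 * θ ≤ D →
    ∀ n : ℕ,
      (∀ P₀ : Measure X, IsProbabilityMeasure P₀ → ‖μemb P₀ - μemb Q₀‖ ≤ θ →
        (Measure.pi fun _ : Fin n => P₀)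
            {xs | ‖emp n xs - μemb Q₁‖ ≤ ‖emp n xs - μemb Q₀‖}
          ≤ ENNReal.ofReal (Real.exp (-(n * (D ^ 2 - 2 * θ * D) ^ 2) / (8 * K ^ 2)))) ∧
      (∀ P₁ : Measure X, IsProbabilityMeasure P₁ → ‖μemb P₁ - μemb Q₁‖ ≤ θ →
        (Measure.pi fun _ : Fin n => P₁)
            {xs | ‖emp n xs - μemb Q₀‖ < ‖emp n xs - μemb Q₁‖}
          ≤ ENNReal.ofReal (Real.exp (-(n * (D ^ 2 - 2 * θ * D) ^ 2) / (8 * K ^ 2)))) := by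
  intro μemb emp D hD n
  have hDdef : D = ‖μemb Q₁ - μemb Q₀‖ := rfl
  have hD0 : 0 ≤ D := hDdef ▸ norm_nonneg _
  have hgap0 : 0 ≤ D ^ 2 - 2 * θ * D := by nlinarith
  rcases eq_or_lt_of_le hgap0 with hzero | hpos
  · -- degenerate case : the bound is 1
    have hone : ENNReal.ofReal
        (Real.exp (-(n * (D ^ 2 - 2 * θ * D) ^ 2) / (8 * K ^ 2))) = 1 := by
      rw [← hzero]
      norm_num
    constructor
    · intro P₀ hP₀ _
      haveI := hP₀
      rw [hone]
      exact prob_le_one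
    · intro P₁ hP₁ _
      haveI := hP₁
      rw [hone]
      exact prob_le_one
  · -- main case
    have hDpos : 0 < D := by nlinarith
    have hXne : Nonempty X := by
      by_contra h
      rw [not_nonempty_iff] at h
      have h1 : Q₀ Set.univ = 1 := measure_univ
      rw [Set.univ_eq_empty_iff.mpr h] at h1
      simp at h1
    obtain ⟨x₀⟩ := hXne
    have hK0 : 0 ≤ K := le_trans (hker x₀ x₀).1 (hker x₀ x₀).2
    have hKpos : 0 < K := by
      rcases lt_or_eq_of_le hK0 with h | h
      · exact h
      · exfalso
        have hΦ0 : ∀ x, Φ x = 0 := by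
          intro x
          have h1 := (hker x x).2
          rw [real_inner_self_eq_norm_sq] at h1
          have : ‖Φ x‖ = 0 := by nlinarith [norm_nonneg (Φ x)]
          exact norm_eq_zero.mp this
        have hΦ : Φ = fun _ => (0 : H) := funext hΦ0
        have h1 : μemb Q₁ = 0 := by show ∫ x, Φ x ∂Q₁ = 0; rw [hΦ]; simp
        have h0 : μemb Q₀ = 0 := by show ∫ x, Φ x ∂Q₀ = 0; rw [hΦ]; simp
        rw [hDdef, h1, h0] at hDpos
        simp at hDpos
    set Δ : H := μemb Q₁ - μemb Q₀ with hΔ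
    set c : ℝ := (‖μemb Q₁‖ ^ 2 - ‖μemb Q₀‖ ^ 2) / 2 with hc
    set f : X → ℝ := fun x => ⟪Φ x, Δ⟫_ℝ - c with hfdef
    set t : ℝ := (D ^ 2 - 2 * θ * D) / 2 with htdef
    have ht0 : 0 ≤ t := by rw [htdef]; linarith
    -- measurability
    have hinnermeas : ∀ z : H, Measurable fun x => ⟪Φ x, z⟫_ℝ := by
      intro z
      have heq : (fun x => ⟪Φ x, z⟫_ℝ) = fun x => (innerSL ℝ z) (Φ x) :=
        funext fun x => real_inner_comm _ _
      rw [heq]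
      exact ((innerSL ℝ z).continuous.comp_stronglyMeasurable hΦm).measurable
    have hfmeas : Measurable f := (hinnermeas Δ).sub_const c
    -- integrability of Φ
    have hΦint : ∀ (P : Measure X), IsProbabilityMeasure P → Integrable Φ P := by
      intro P hP
      haveI := hP
      exact (integrable_const C).mono' hΦm.aestronglyMeasurable
        (Filter.Eventually.of_forall hΦb)
    -- integrability of inner products with a fixed vector
    have hinnerint : ∀ (P : Measure X), IsProbabilityMeasure P → ∀ z : H,
        Integrable (fun x => ⟪Φ x, z⟫_ℝ) P := by
      intro P hP z
      haveI := hP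
      apply (integrable_const (C * ‖z‖)).mono' (hinnermeas z).aestronglyMeasurable
      filter_upwards with x
      rw [Real.norm_eq_abs]
      calc |⟪Φ x, z⟫_ℝ| ≤ ‖Φ x‖ * ‖z‖ := abs_real_inner_le_norm _ _
        _ ≤ C * ‖z‖ := mul_le_mul_of_nonneg_right (hΦb x) (norm_nonneg z)
    -- kernel bound on inner products with embeddings
    have hembb : ∀ (P : Measure X), IsProbabilityMeasure P → ∀ x,
        ⟪Φ x, μemb P⟫_ℝ ∈ Set.Icc 0 K := by
      intro P hP x
      haveI := hP
      have h1 : ⟪Φ x, μemb P⟫_ℝ = ∫ y, ⟪Φ x, Φ y⟫_ℝ ∂P :=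
        (integral_inner (hΦint P hP) (Φ x)).symm
      constructor
      · rw [h1]; exact integral_nonneg fun y => (hker x y).1
      · rw [h1]
        have hmeas2 : Measurable fun y => ⟪Φ x, Φ y⟫_ℝ :=
          ((innerSL ℝ (Φ x)).continuous.comp_stronglyMeasurable hΦm).measurable
        have hint : Integrable (fun y => ⟪Φ x, Φ y⟫_ℝ) P := by
          apply (integrable_const K).mono' hmeas2.aestronglyMeasurable
          filter_upwards with y
          rw [Real.norm_eq_abs, abs_of_nonneg (hker x y).1]
          exact (hker x y).2
        have := integral_mono hint (integrable_const K) (fun y => (hker x y).2)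
        simpa using this
    -- bound on inner products with Δ
    have hxΔ : ∀ x, ⟪Φ x, Δ⟫_ℝ ∈ Set.Icc (-K) K := by
      intro x
      have h1 : ⟪Φ x, Δ⟫_ℝ = ⟪Φ x, μemb Q₁⟫_ℝ - ⟪Φ x, μemb Q₀⟫_ℝ := by
        rw [hΔ, inner_sub_right]
      obtain ⟨ha1, hb1⟩ := hembb Q₁ inferInstance x
      obtain ⟨ha0, hb0⟩ := hembb Q₀ inferInstance x
      rw [h1, Set.mem_Icc]
      constructor <;> linarith
    -- mean of the inner products
    have hmeani : ∀ (P : Measure X), IsProbabilityMeasure P →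
        ∫ x, ⟪Φ x, Δ⟫_ℝ ∂P = ⟪μemb P, Δ⟫_ℝ := by
      intro P hP
      haveI := hP
      have heq : (fun x => ⟪Φ x, Δ⟫_ℝ) = fun x => ⟪Δ, Φ x⟫_ℝ :=
        funext fun x => real_inner_comm _ _
      rw [heq, integral_inner (hΦint P hP) Δ, real_inner_comm]
    -- mean of f
    have hmean : ∀ (P : Measure X), IsProbabilityMeasure P →
        ∫ x, f x ∂P = ⟪μemb P, Δ⟫_ℝ - c := by
      intro P hP
      haveI := hP
      rw [hfdef]
      rw [integral_sub (hinnerint P hP Δ) (integrable_const c), hmeani P hP, integral_const]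
      simp
    -- geometric identities
    have hDΔ : D = ‖Δ‖ := hDdef
    have hQ0c : ⟪μemb Q₀, Δ⟫_ℝ - c = -(D ^ 2) / 2 := by
      have e1 : ⟪μemb Q₀, Δ⟫_ℝ = ⟪μemb Q₀, μemb Q₁⟫_ℝ - ‖μemb Q₀‖ ^ 2 := by
        rw [hΔ, inner_sub_right, real_inner_self_eq_norm_sq]
      have e2 : D ^ 2 = ‖μemb Q₁‖ ^ 2 - 2 * ⟪μemb Q₁, μemb Q₀⟫_ℝ + ‖μemb Q₀‖ ^ 2 := by
        rw [hDdef]; exact norm_sub_sq_real _ _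
      have e3 := real_inner_comm (μemb Q₀) (μemb Q₁)
      rw [e1, hc]; linarith
    have hQ1c : ⟪μemb Q₁, Δ⟫_ℝ - c = D ^ 2 / 2 := by
      have e1 : ⟪μemb Q₁, Δ⟫_ℝ = ‖μemb Q₁‖ ^ 2 - ⟪μemb Q₁, μemb Q₀⟫_ℝ := by
        rw [hΔ, inner_sub_right, real_inner_self_eq_norm_sq]
      have e2 : D ^ 2 = ‖μemb Q₁‖ ^ 2 - 2 * ⟪μemb Q₁, μemb Q₀⟫_ℝ + ‖μemb Q₀‖ ^ 2 := by
        rw [hDdef]; exact norm_sub_sq_real _ _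
      rw [e1, hc]; linarith
    -- sums of f along a tuple
    have hsumf : ∀ xs : Fin n → X,
        ∑ i, f (xs i) = (∑ i, ⟪Φ (xs i), Δ⟫_ℝ) - n * c := by
      intro xs
      rw [hfdef]
      rw [Finset.sum_sub_distrib, Finset.sum_const, Finset.card_univ, Fintype.card_fin,
        nsmul_eq_mul]
    -- inner product of the empirical embedding with Δ
    have hempinner : ∀ xs : Fin n → X,
        ⟪emp n xs, Δ⟫_ℝ = (n : ℝ)⁻¹ * ∑ i, ⟪Φ (xs i), Δ⟫_ℝ := by
      intro xs
      show ⟪(n : ℝ)⁻¹ • ∑ i, Φ (xs i), Δ⟫_ℝ = _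
      rw [real_inner_smul_left, sum_inner]
    -- final bound conversion
    have hexp_eq : -(↑n * t ^ 2) / (2 * K ^ 2)
        = -(↑n * (D ^ 2 - 2 * θ * D) ^ 2) / (8 * K ^ 2) := by
      rw [htdef]; ring
    constructor
    · -- type I error
      intro P₀ hP₀ hP₀θ
      haveI := hP₀
      have hmean0 : ∫ x, f x ∂P₀ ≤ -t := by
        rw [hmean P₀ hP₀]
        have h1 : ⟪μemb P₀ - μemb Q₀, Δ⟫_ℝ ≤ θ * D := by
          calc ⟪μemb P₀ - μemb Q₀, Δ⟫_ℝ ≤ ‖μemb P₀ - μemb Q₀‖ * ‖Δ‖ := real_inner_le_norm _ _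
            _ ≤ θ * D := by rw [← hDΔ]; exact mul_le_mul_of_nonneg_right hP₀θ hD0
        have h2 : ⟪μemb P₀ - μemb Q₀, Δ⟫_ℝ = ⟪μemb P₀, Δ⟫_ℝ - ⟪μemb Q₀, Δ⟫_ℝ :=
          inner_sub_left _ _ _
        rw [htdef]; linarith
      have hsub : {xs : Fin n → X | ‖emp n xs - μemb Q₁‖ ≤ ‖emp n xs - μemb Q₀‖}
          ⊆ {xs | 0 ≤ ∑ i, f (xs i)} := by
        intro xs hxs
        simp only [Set.mem_setOf_eq] at hxs ⊢
        rcases Nat.eq_zero_or_pos n with hn | hn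
        · subst hn; simp
        · have hsq := pow_le_pow_left₀ (norm_nonneg _) hxs 2
          rw [norm_sub_sq_real, norm_sub_sq_real] at hsq
          have h1 : c ≤ ⟪emp n xs, Δ⟫_ℝ := by
            rw [hΔ, inner_sub_right, hc]; linarith
          rw [hempinner xs] at h1
          have hnpos : (0 : ℝ) < n := Nat.cast_pos.mpr hn
          have h4 : (n : ℝ) * c ≤ ∑ i, ⟪Φ (xs i), Δ⟫_ℝ := by
            have h5 := mul_le_mul_of_nonneg_left h1 hnpos.le
            rwa [← mul_assoc, mul_inv_cancel₀ hnpos.ne', one_mul] at h5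
          rw [hsumf xs]; linarith
      calc (Measure.pi fun _ : Fin n => P₀)
            {xs | ‖emp n xs - μemb Q₁‖ ≤ ‖emp n xs - μemb Q₀‖}
          ≤ (Measure.pi fun _ : Fin n => P₀) {xs | 0 ≤ ∑ i, f (xs i)} := measure_mono hsub
        _ ≤ ENNReal.ofReal (Real.exp (-(n * t ^ 2) / (2 * K ^ 2))) := by
            apply chernoff_pi P₀ f hfmeas (-K - c) (K - c) K hKpos (by linarith)
              (fun x => ?_) (by linarith) t ht0 hmean0 n
            obtain ⟨ha, hb⟩ := hxΔ x
            constructor <;> show _ ≤ _ <;> simp only [hfdef] <;> linarith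
        _ = ENNReal.ofReal (Real.exp (-(n * (D ^ 2 - 2 * θ * D) ^ 2) / (8 * K ^ 2))) := by
            rw [hexp_eq]
    · -- type II error
      intro P₁ hP₁ hP₁θ
      haveI := hP₁
      set g : X → ℝ := fun x => c - ⟪Φ x, Δ⟫_ℝ with hgdef
      have hgmeas : Measurable g := (measurable_const.sub (hinnermeas Δ))
      have hmean1 : ∫ x, g x ∂P₁ ≤ -t := by
        have hint : ∫ x, g x ∂P₁ = c - ⟪μemb P₁, Δ⟫_ℝ := by
          rw [hgdef, integral_sub (integrable_const c) (hinnerint P₁ hP₁ Δ),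
            hmeani P₁ hP₁, integral_const]
          simp
        rw [hint]
        have h1 : ⟪μemb Q₁ - μemb P₁, Δ⟫_ℝ ≤ θ * D := by
          calc ⟪μemb Q₁ - μemb P₁, Δ⟫_ℝ ≤ ‖μemb Q₁ - μemb P₁‖ * ‖Δ‖ := real_inner_le_norm _ _
            _ ≤ θ * D := by
                rw [← hDΔ, norm_sub_rev]
                exact mul_le_mul_of_nonneg_right hP₁θ hD0
        have h2 : ⟪μemb Q₁ - μemb P₁, Δ⟫_ℝ = ⟪μemb Q₁, Δ⟫_ℝ - ⟪μemb P₁, Δ⟫_ℝ :=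
          inner_sub_left _ _ _
        rw [htdef]; linarith
      have hsumg : ∀ xs : Fin n → X,
          ∑ i, g (xs i) = n * c - ∑ i, ⟪Φ (xs i), Δ⟫_ℝ := by
        intro xs
        rw [hgdef]
        rw [Finset.sum_sub_distrib, Finset.sum_const, Finset.card_univ, Fintype.card_fin,
          nsmul_eq_mul]
      have hsub : {xs : Fin n → X | ‖emp n xs - μemb Q₀‖ < ‖emp n xs - μemb Q₁‖}
          ⊆ {xs | 0 ≤ ∑ i, g (xs i)} := by
        intro xs hxs
        simp only [Set.mem_setOf_eq] at hxs ⊢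
        rcases Nat.eq_zero_or_pos n with hn | hn
        · subst hn; simp
        · have hsq := pow_le_pow_left₀ (norm_nonneg _) hxs.le 2
          rw [norm_sub_sq_real, norm_sub_sq_real] at hsq
          have h1 : ⟪emp n xs, Δ⟫_ℝ ≤ c := by
            rw [hΔ, inner_sub_right, hc]; linarith
          rw [hempinner xs] at h1
          have hnpos : (0 : ℝ) < n := Nat.cast_pos.mpr hn
          have h4 : ∑ i, ⟪Φ (xs i), Δ⟫_ℝ ≤ (n : ℝ) * c := by
            have h5 := mul_le_mul_of_nonneg_left h1 hnpos.le
            rwa [← mul_assoc, mul_inv_cancel₀ hnpos.ne', one_mul] at h5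
          rw [hsumg xs]; linarith
      calc (Measure.pi fun _ : Fin n => P₁)
            {xs | ‖emp n xs - μemb Q₀‖ < ‖emp n xs - μemb Q₁‖}
          ≤ (Measure.pi fun _ : Fin n => P₁) {xs | 0 ≤ ∑ i, g (xs i)} := measure_mono hsub
        _ ≤ ENNReal.ofReal (Real.exp (-(n * t ^ 2) / (2 * K ^ 2))) := by
            apply chernoff_pi P₁ g hgmeas (c - K) (c + K) K hKpos (by linarith)
              (fun x => ?_) (by linarith) t ht0 hmean1 n
            obtain ⟨ha, hb⟩ := hxΔ x
            constructor <;> show _ ≤ _ <;> simp only [hgdef] <;> linarith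
        _ = ENNReal.ofReal (Real.exp (-(n * (D ^ 2 - 2 * θ * D) ^ 2) / (8 * K ^ 2))) := by
            rw [hexp_eq]
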